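/- arXiv:2007.04635 — 2 statements merged into one kernel-verified Lean document; each statement's English description precedes it below -/
import Mathlib

section
/- Let ν, r > 0, N ∈ ℕ, p ∈ (1,∞), let η_0, η_1, …, η_{N+1} ∈ ℝ^d be points with |η_{j+1} − η_j| ≤ r for all j, and suppose r(1 + 2ν) ≤ r'. Let F ⊆ ℝ^d be measurable, let B_j := F ∩ B(η_j, νr) and assume each B_j has positive finite measure. Then for any measurable u on F, ∫_{B_0 × B_{N+1}} |u(x) − u(y)|^p dx dy ≤ (N+1)^{p−1} · max_j (|B_0||B_{N+1}| / (|B_j||B_{j−1}|) ) · Σ_{j=1}^{N+1} ∫_{(B_j × B_{j−1})} |u(ξ)−u(ζ)|^p dξ dζ, and each set B_j × B_{j−1} is contained in (F × F) ∩ D_{r'}, where D_{r'} = {(x,y) : |x−y| ≤ r'}. Consequently the double-difference integral between the endpoints of a discrete chain of overlapping balls is controlled by short-range double-difference integrals. -/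
open MeasureTheory
open scoped ENNReal

lemma aux_smul_prod {α β : Type*} [MeasurableSpace α] [MeasurableSpace β]
    (a b : ℝ≥0∞) (μ : Measure α) (ν : Measure β)
    [SigmaFinite μ] [SigmaFinite ν] [SigmaFinite (a • μ)] [SigmaFinite (b • ν)] :
    (a • μ).prod (b • ν) = (a * b) • (μ.prod ν) := by
  refine Measure.prod_eq fun s t hs ht => ?_
  simp only [Measure.smul_apply, smul_eq_mul, Measure.prod_prod]
  ring

lemma aux_symm {α : Type*} [MeasurableSpace α] (p : ℝ) (μ ν : Measure α)
    [SFinite μ] [SFinite ν] (u : α → ℝ) (hu : Measurable u) :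
    (∫⁻ z : α × α, ENNReal.ofReal (|u z.1 - u z.2| ^ p) ∂(μ.prod ν)) =
    (∫⁻ z : α × α, ENNReal.ofReal (|u z.1 - u z.2| ^ p) ∂(ν.prod μ)) := by
  have hm : Measurable fun z : α × α => ENNReal.ofReal (|u z.1 - u z.2| ^ p) :=
    ENNReal.measurable_ofReal.comp
      ((((hu.comp measurable_fst).sub (hu.comp measurable_snd)).abs).pow measurable_const)
  rw [← Measure.prod_swap, lintegral_map hm measurable_swap]
  simp_rw [Prod.fst_swap, Prod.snd_swap]
  congr 1
  ext z
  rw [abs_sub_comm]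

lemma aux_mink {α : Type*} [MeasurableSpace α] (p : ℝ) (hp : 1 ≤ p)
    (μ₀ μ₁ μ₂ : Measure α) [IsProbabilityMeasure μ₀] [IsProbabilityMeasure μ₁]
    [IsProbabilityMeasure μ₂] (u : α → ℝ) (hu : Measurable u) :
    (∫⁻ z : α × α, ENNReal.ofReal (|u z.1 - u z.2| ^ p) ∂(μ₀.prod μ₂)) ^ (1 / p) ≤
    (∫⁻ z : α × α, ENNReal.ofReal (|u z.1 - u z.2| ^ p) ∂(μ₀.prod μ₁)) ^ (1 / p) +
    (∫⁻ z : α × α, ENNReal.ofReal (|u z.1 - u z.2| ^ p) ∂(μ₁.prod μ₂)) ^ (1 / p) := by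
  have hp0 : (0 : ℝ) < p := lt_of_lt_of_le zero_lt_one hp
  set P : Measure (α × α × α) := μ₀.prod (μ₁.prod μ₂) with hP
  set f : α × α × α → ℝ≥0∞ := fun z => ENNReal.ofReal |u z.1 - u z.2.1| with hf
  set g : α × α × α → ℝ≥0∞ := fun z => ENNReal.ofReal |u z.2.1 - u z.2.2| with hg
  have hfm : Measurable f :=
    ENNReal.measurable_ofReal.comp
      (((hu.comp measurable_fst).sub (hu.comp (measurable_fst.comp measurable_snd))).abs)
  have hgm : Measurable g :=
    ENNReal.measurable_ofReal.comp
      (((hu.comp (measurable_fst.comp measurable_snd)).sub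
        (hu.comp (measurable_snd.comp measurable_snd))).abs)
  have hFm : Measurable fun w : α × α => (ENNReal.ofReal |u w.1 - u w.2|) ^ p :=
    (ENNReal.measurable_ofReal.comp
      (((hu.comp measurable_fst).sub (hu.comp measurable_snd)).abs)).pow measurable_const
  have hor : ∀ w : α × α, ENNReal.ofReal (|u w.1 - u w.2| ^ p)
      = (ENNReal.ofReal |u w.1 - u w.2|) ^ p := fun w =>
    (ENNReal.ofReal_rpow_of_nonneg (abs_nonneg _) hp0.le).symm
  simp_rw [hor]
  have hmap02 : Measure.map (Prod.map (id : α → α) Prod.snd) P = μ₀.prod μ₂ := by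
    rw [hP, ← Measure.map_prod_map _ _ measurable_id measurable_snd,
      Measure.map_id, Measure.map_snd_prod, measure_univ, one_smul]
  have hmap01 : Measure.map (Prod.map (id : α → α) Prod.fst) P = μ₀.prod μ₁ := by
    rw [hP, ← Measure.map_prod_map _ _ measurable_id measurable_fst,
      Measure.map_id, Measure.map_fst_prod, measure_univ, one_smul]
  have hmap12 : Measure.map (Prod.snd : α × α × α → α × α) P = μ₁.prod μ₂ := by
    rw [hP, Measure.map_snd_prod, measure_univ, one_smul]
  have key := ENNReal.lintegral_Lp_add_le (μ := P) hfm.aemeasurable hgm.aemeasurable hp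
  have h1 : (∫⁻ w : α × α, (ENNReal.ofReal |u w.1 - u w.2|) ^ p ∂(μ₀.prod μ₂))
      ≤ ∫⁻ z, (f + g) z ^ p ∂P := by
    rw [← hmap02, lintegral_map hFm (measurable_id.prodMap measurable_snd)]
    refine lintegral_mono fun z => ?_
    refine ENNReal.rpow_le_rpow ?_ hp0.le
    simp only [Pi.add_apply, hf, hg, Prod.map_apply, id_eq]
    rw [← ENNReal.ofReal_add (abs_nonneg _) (abs_nonneg _)]
    exact ENNReal.ofReal_le_ofReal (abs_sub_le _ _ _)
  have h2 : (∫⁻ z, f z ^ p ∂P)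
      = ∫⁻ w : α × α, (ENNReal.ofReal |u w.1 - u w.2|) ^ p ∂(μ₀.prod μ₁) := by
    rw [← hmap01, lintegral_map hFm (measurable_id.prodMap measurable_fst)]; rfl
  have h3 : (∫⁻ z, g z ^ p ∂P)
      = ∫⁻ w : α × α, (ENNReal.ofReal |u w.1 - u w.2|) ^ p ∂(μ₁.prod μ₂) := by
    rw [← hmap12, lintegral_map hFm measurable_snd]
  calc (∫⁻ w : α × α, (ENNReal.ofReal |u w.1 - u w.2|) ^ p ∂(μ₀.prod μ₂)) ^ (1 / p)
      ≤ (∫⁻ z, (f + g) z ^ p ∂P) ^ (1 / p) := ENNReal.rpow_le_rpow h1 (by positivity)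
    _ ≤ (∫⁻ z, f z ^ p ∂P) ^ (1 / p) + (∫⁻ z, g z ^ p ∂P) ^ (1 / p) := key
    _ = _ := by rw [h2, h3]

lemma aux_pow_sum (n : ℕ) (hn : n ≠ 0) (p : ℝ) (hp : 1 ≤ p) (a : ℕ → ℝ≥0∞) :
    (∑ i ∈ Finset.range n, a i) ^ p ≤
      (n : ℝ≥0∞) ^ (p - 1) * ∑ i ∈ Finset.range n, a i ^ p := by
  set c : ℝ≥0∞ := (n : ℝ≥0∞) with hc
  have hc0 : c ≠ 0 := by simpa [hc] using hn
  have hctop : c ≠ ⊤ := by simp [hc]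
  have hw : ∑ _i ∈ Finset.range n, c⁻¹ = 1 := by
    rw [Finset.sum_const, Finset.card_range, nsmul_eq_mul, ← hc,
      ENNReal.mul_inv_cancel hc0 hctop]
  have h := ENNReal.rpow_arith_mean_le_arith_mean_rpow (Finset.range n)
    (fun _ => c⁻¹) (fun i => c * a i) hw hp
  have hL : ∀ i, c⁻¹ * (c * a i) = a i := fun i => by
    rw [← mul_assoc, ENNReal.inv_mul_cancel hc0 hctop, one_mul]
  have hR : ∀ i, c⁻¹ * (c * a i) ^ p = c ^ (p - 1) * a i ^ p := fun i => by
    rw [ENNReal.mul_rpow_of_nonneg _ _ (by linarith : (0:ℝ) ≤ p), ← mul_assoc]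
    congr 1
    rw [← ENNReal.rpow_neg_one c, ← ENNReal.rpow_add _ _ hc0 hctop]
    congr 1
    ring
  simp only [hL, hR] at h
  rwa [← Finset.mul_sum] at h

lemma aux_chain {α : Type*} [MeasurableSpace α] (vol : Measure α) [SigmaFinite vol]
    (p : ℝ) (hp : 1 < p) (n : ℕ) (S : ℕ → Set α)
    (hpos : ∀ k, 0 < vol (S k)) (hfin : ∀ k, vol (S k) < ⊤)
    (u : α → ℝ) (hu : Measurable u) :
    (∫⁻ z in S 0 ×ˢ S (n+1), ENNReal.ofReal (|u z.1 - u z.2| ^ p) ∂(vol.prod vol)) ≤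
      ((n+1 : ℕ) : ℝ≥0∞) ^ (p-1) * ∑ i ∈ Finset.range (n+1),
        (vol (S 0) * vol (S (n+1)) / (vol (S (i+1)) * vol (S i))) *
        ∫⁻ z in S (i+1) ×ˢ S i, ENNReal.ofReal (|u z.1 - u z.2| ^ p) ∂(vol.prod vol) := by
  have hp0 : (0:ℝ) < p := by linarith
  set c : ℕ → ℝ≥0∞ := fun k => vol (S k) with hc
  have hc0 : ∀ k, c k ≠ 0 := fun k => (hpos k).ne'
  have hctop : ∀ k, c k ≠ ⊤ := fun k => (hfin k).ne
  set μn : ℕ → Measure α := fun k => (c k)⁻¹ • vol.restrict (S k) with hμ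
  have hrestu : ∀ k, vol.restrict (S k) Set.univ = c k := fun k => by
    rw [Measure.restrict_apply_univ]
  have hprob : ∀ k, IsProbabilityMeasure (μn k) := fun k => ⟨by
    rw [hμ]
    simp only [Measure.smul_apply, smul_eq_mul]
    rw [hrestu k, ENNReal.inv_mul_cancel (hc0 k) (hctop k)]⟩
  set T : ℕ → ℕ → ℝ≥0∞ := fun a b =>
    ∫⁻ z : α × α, ENNReal.ofReal (|u z.1 - u z.2| ^ p) ∂((μn a).prod (μn b)) with hT
  have hsymm : ∀ a b, T a b = T b a := fun a b => by
    haveI := hprob a; haveI := hprob b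
    exact aux_symm p (μn a) (μn b) u hu
  have claim : ∀ k : ℕ, T 0 (k+1) ^ (1/p) ≤
      ∑ i ∈ Finset.range (k+1), T (i+1) i ^ (1/p) := by
    intro k
    induction k with
    | zero =>
      simpa [Finset.sum_range_one] using
        le_of_eq (congrArg (· ^ (1/p)) (hsymm 0 1))
    | succ k ih =>
      haveI := hprob 0; haveI := hprob (k+1); haveI := hprob (k+2)
      have hm := aux_mink p hp.le (μn 0) (μn (k+1)) (μn (k+2)) u hu
      rw [Finset.sum_range_succ]
      exact le_trans hm (add_le_add ih (le_of_eq (congrArg (· ^ (1/p)) (hsymm (k+1) (k+2)))))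
  have hrp : ∀ x : ℝ≥0∞, (x ^ (1/p)) ^ p = x := fun x => by
    rw [← ENNReal.rpow_mul, one_div_mul_cancel hp0.ne', ENNReal.rpow_one]
  have hmain : T 0 (n+1) ≤ ((n+1:ℕ):ℝ≥0∞) ^ (p-1) *
      ∑ i ∈ Finset.range (n+1), T (i+1) i := by
    calc T 0 (n+1) = (T 0 (n+1) ^ (1/p)) ^ p := (hrp _).symm
      _ ≤ (∑ i ∈ Finset.range (n+1), T (i+1) i ^ (1/p)) ^ p :=
          ENNReal.rpow_le_rpow (claim n) hp0.le
      _ ≤ ((n+1:ℕ):ℝ≥0∞) ^ (p-1) *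
          ∑ i ∈ Finset.range (n+1), (T (i+1) i ^ (1/p)) ^ p :=
          aux_pow_sum (n+1) (Nat.succ_ne_zero n) p hp.le _
      _ = _ := by simp_rw [hrp]
  have hTL : ∀ a b, T a b = (c a * c b)⁻¹ *
      ∫⁻ z in S a ×ˢ S b, ENNReal.ofReal (|u z.1 - u z.2| ^ p) ∂(vol.prod vol) := by
    intro a b
    haveI ha : IsFiniteMeasure (vol.restrict (S a)) :=
      ⟨by rw [Measure.restrict_apply_univ]; exact hfin a⟩
    haveI hb : IsFiniteMeasure (vol.restrict (S b)) :=
      ⟨by rw [Measure.restrict_apply_univ]; exact hfin b⟩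
    haveI : IsProbabilityMeasure ((c a)⁻¹ • vol.restrict (S a)) := hprob a
    haveI : IsProbabilityMeasure ((c b)⁻¹ • vol.restrict (S b)) := hprob b
    have : T a b = ∫⁻ z : α × α, ENNReal.ofReal (|u z.1 - u z.2| ^ p)
        ∂(((c a)⁻¹ • vol.restrict (S a)).prod ((c b)⁻¹ • vol.restrict (S b))) := rfl
    rw [this, aux_smul_prod, lintegral_smul_measure, Measure.prod_restrict,
      ENNReal.mul_inv (Or.inl (hc0 a)) (Or.inl (hctop a)), smul_eq_mul]
  have hM0 : c 0 * c (n+1) ≠ 0 := mul_ne_zero (hc0 0) (hc0 (n+1))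
  have hMtop : c 0 * c (n+1) ≠ ⊤ := ENNReal.mul_ne_top (hctop 0) (hctop (n+1))
  calc (∫⁻ z in S 0 ×ˢ S (n+1), ENNReal.ofReal (|u z.1 - u z.2| ^ p) ∂(vol.prod vol))
      = (c 0 * c (n+1)) * T 0 (n+1) := by
        rw [hTL 0 (n+1), ← mul_assoc, ENNReal.mul_inv_cancel hM0 hMtop, one_mul]
    _ ≤ (c 0 * c (n+1)) * (((n+1:ℕ):ℝ≥0∞) ^ (p-1) *
          ∑ i ∈ Finset.range (n+1), T (i+1) i) := mul_le_mul_right hmain _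
    _ = ((n+1:ℕ):ℝ≥0∞) ^ (p-1) *
          ∑ i ∈ Finset.range (n+1), (c 0 * c (n+1)) * T (i+1) i := by
        rw [mul_left_comm, Finset.mul_sum]
    _ = _ := by
        congr 1
        refine Finset.sum_congr rfl fun i _ => ?_
        rw [hTL (i+1) i, ← mul_assoc, ENNReal.div_eq_inv_mul]
        ring


/-- Chaining estimate along a discrete path of overlapping balls: with
`B_j = F ∩ B(η_j, νr)` of positive finite measure, `|η_{j+1} − η_j| ≤ r` and
`r(1+2ν) ≤ r'`, each `B_j × B_{j−1} ⊆ (F × F) ∩ D_{r'}` and the double-difference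
integral between the endpoints is controlled by the short-range ones. -/
theorem stmt4 {d : ℕ} (ν r r' : ℝ) (hν : 0 < ν) (hr : 0 < r) (N : ℕ)
    (p : ℝ) (hp : 1 < p)
    (η : Fin (N + 2) → EuclideanSpace ℝ (Fin d))
    (hchain : ∀ j : Fin (N + 1), dist (η j.succ) (η j.castSucc) ≤ r)
    (hrr' : r * (1 + 2 * ν) ≤ r')
    (F : Set (EuclideanSpace ℝ (Fin d))) (hF : MeasurableSet F)
    (B : Fin (N + 2) → Set (EuclideanSpace ℝ (Fin d)))
    (hB : ∀ j, B j = F ∩ Metric.closedBall (η j) (ν * r))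
    (hpos : ∀ j, 0 < volume (B j)) (hfin : ∀ j, volume (B j) < ⊤)
    (u : EuclideanSpace ℝ (Fin d) → ℝ) (hu : Measurable u) :
    (∀ j : Fin (N + 1), (B j.succ ×ˢ B j.castSucc) ⊆
        (F ×ˢ F) ∩ {z : EuclideanSpace ℝ (Fin d) × EuclideanSpace ℝ (Fin d) |
          dist z.1 z.2 ≤ r'}) ∧
    (∫⁻ z in B 0 ×ˢ B (Fin.last (N + 1)),
        ENNReal.ofReal (|u z.1 - u z.2| ^ p) ∂(volume.prod volume)) ≤
      ENNReal.ofReal ((N + 1 : ℝ) ^ (p - 1)) *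
        (⨆ j : Fin (N + 1),
          volume (B 0) * volume (B (Fin.last (N + 1))) /
            (volume (B j.succ) * volume (B j.castSucc))) *
        ∑ j : Fin (N + 1),
          ∫⁻ z in B j.succ ×ˢ B j.castSucc,
            ENNReal.ofReal (|u z.1 - u z.2| ^ p) ∂(volume.prod volume) := by
  constructor
  · -- inclusion part
    rintro j ⟨x, y⟩ hz
    rw [Set.mem_prod] at hz
    obtain ⟨hx, hy⟩ := hz
    rw [hB j.succ] at hx
    rw [hB j.castSucc] at hy
    refine ⟨⟨hx.1, hy.1⟩, ?_⟩
    have hx2 : dist x (η j.succ) ≤ ν * r := hx.2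
    have hy2 : dist y (η j.castSucc) ≤ ν * r := hy.2
    simp only [Set.mem_setOf_eq]
    calc dist x y ≤ dist x (η j.succ) + dist (η j.succ) (η j.castSucc)
        + dist (η j.castSucc) y := dist_triangle4 x (η j.succ) (η j.castSucc) y
      _ ≤ ν * r + r + ν * r := by
          have : dist (η j.castSucc) y = dist y (η j.castSucc) := dist_comm _ _
          rw [this]
          exact add_le_add (add_le_add hx2 (hchain j)) hy2
      _ = r * (1 + 2 * ν) := by ring
      _ ≤ r' := hrr'
  · -- the chaining estimate
    have hp0 : (0:ℝ) < p := by linarith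
    set Bn : ℕ → Set (EuclideanSpace ℝ (Fin d)) :=
      fun k => B ⟨min k (N+1), by omega⟩ with hBn
    have hpos' : ∀ k, volume (Bn k) > 0 := fun k => hpos _
    have hfin' : ∀ k, volume (Bn k) < ⊤ := fun k => hfin _
    have key := aux_chain volume p hp N Bn hpos' hfin' u hu
    have hBn0 : Bn 0 = B 0 := congrArg B (Fin.ext (by simp))
    have hBnlast : Bn (N+1) = B (Fin.last (N+1)) := congrArg B (Fin.ext (by simp))
    have hBsucc : ∀ j : Fin (N+1), Bn (j.val + 1) = B j.succ := fun j =>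
      congrArg B (Fin.ext (by simp [Fin.val_succ] <;> omega))
    have hBcast : ∀ j : Fin (N+1), Bn j.val = B j.castSucc := fun j =>
      congrArg B (Fin.ext (by simp [Fin.coe_castSucc] <;> omega))
    rw [hBn0, hBnlast] at key
    refine le_trans key ?_
    have hK : ((N+1:ℕ):ℝ≥0∞) ^ (p-1) = ENNReal.ofReal ((N + 1 : ℝ) ^ (p - 1)) := by
      have h1 : ((N+1:ℕ):ℝ≥0∞) = ENNReal.ofReal ((N+1:ℕ):ℝ) := by
        rw [ENNReal.ofReal_natCast]
      rw [h1, ENNReal.ofReal_rpow_of_pos (by positivity)]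
      congr 2
      push_cast
      ring
    rw [← hK]
    rw [mul_assoc]
    refine mul_le_mul_right ?_ _
    -- bound the sum with coefficients by sup times sum
    have hsum : (∑ i ∈ Finset.range (N+1),
        (volume (B 0) * volume (B (Fin.last (N+1))) / (volume (Bn (i+1)) * volume (Bn i))) *
        ∫⁻ z in Bn (i+1) ×ˢ Bn i,
          ENNReal.ofReal (|u z.1 - u z.2| ^ p) ∂(volume.prod volume))
        = ∑ j : Fin (N+1),
        (volume (B 0) * volume (B (Fin.last (N+1))) /
            (volume (B j.succ) * volume (B j.castSucc))) *
        ∫⁻ z in B j.succ ×ˢ B j.castSucc,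
          ENNReal.ofReal (|u z.1 - u z.2| ^ p) ∂(volume.prod volume) := by
      rw [← Fin.sum_univ_eq_sum_range (fun i =>
        (volume (B 0) * volume (B (Fin.last (N+1))) / (volume (Bn (i+1)) * volume (Bn i))) *
        ∫⁻ z in Bn (i+1) ×ˢ Bn i,
          ENNReal.ofReal (|u z.1 - u z.2| ^ p) ∂(volume.prod volume)) (N+1)]
      refine Finset.sum_congr rfl fun j _ => ?_
      rw [hBsucc j, hBcast j]
    rw [hsum]
    have hterm : ∀ j : Fin (N+1),
        (volume (B 0) * volume (B (Fin.last (N+1))) /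
            (volume (B j.succ) * volume (B j.castSucc))) *
        (∫⁻ z in B j.succ ×ˢ B j.castSucc,
          ENNReal.ofReal (|u z.1 - u z.2| ^ p) ∂(volume.prod volume))
        ≤ (⨆ j : Fin (N+1), volume (B 0) * volume (B (Fin.last (N+1))) /
            (volume (B j.succ) * volume (B j.castSucc))) *
        (∫⁻ z in B j.succ ×ˢ B j.castSucc,
          ENNReal.ofReal (|u z.1 - u z.2| ^ p) ∂(volume.prod volume)) := fun j =>
      mul_le_mul_left (le_iSup (fun j : Fin (N+1) =>
        volume (B 0) * volume (B (Fin.last (N+1))) /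
          (volume (B j.succ) * volume (B j.castSucc))) j) _
    calc _ ≤ ∑ j : Fin (N+1),
        (⨆ j : Fin (N+1), volume (B 0) * volume (B (Fin.last (N+1))) /
            (volume (B j.succ) * volume (B j.castSucc))) *
        ∫⁻ z in B j.succ ×ˢ B j.castSucc,
          ENNReal.ofReal (|u z.1 - u z.2| ^ p) ∂(volume.prod volume) :=
        Finset.sum_le_sum fun j _ => hterm j
      _ = _ := by rw [← Finset.mul_sum]
end

section
/- Let B be the open unit ball in ℝ², let ω := {(x,y) ∈ ℝ² : x ∈ (−1,2), −x+1 ≤ y ≤ −x+2}, and define u : B → ℝ by u = 1 on B \ ω and u = 0 on B ∩ ω. Then for every R > 0 and p ∈ (1,∞): ∫_{((B∩ω)×(B∩ω)) ∩ D_R} |u(x)−u(y)|^p dx dy = 0, while if Φ(u) denotes the extension of u to ω obtained by reflection across ∂B (Φ(u)(z) = u(z/|z|²) for z ∈ ω \ B̄ close to ∂B), then for every R > 0, ∫_{(ω×ω) ∩ D_R} |Φ(u)(x)−Φ(u)(y)|^p dx dy > 0. Hence no constant C can satisfy the extension estimate with ω' = ω. -/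
open MeasureTheory ENNReal
open scoped Classical

noncomputable def pt' (x y : ℝ) : EuclideanSpace ℝ (Fin 2) :=
  (WithLp.equiv 2 (Fin 2 → ℝ)).symm ![x, y]

lemma normsq_eq (z : EuclideanSpace ℝ (Fin 2)) : ‖z‖ ^ 2 = z 0 ^ 2 + z 1 ^ 2 := by
  rw [EuclideanSpace.norm_eq, Real.sq_sqrt (by positivity)]
  simp [Fin.sum_univ_two, sq_abs]

lemma cont_eval (i : Fin 2) : Continuous fun z : EuclideanSpace ℝ (Fin 2) => z i :=
  (EuclideanSpace.proj i).continuous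

/-- Counterexample showing the extension estimate fails with `ω' = ω`: on the unit ball
`B ⊆ ℝ²` and the strip `ω`, the function `u = 0` on `B ∩ ω`, `u = 1` on `B \ ω` has zero
non-local energy on `B ∩ ω`, but its reflection `Φ(u)` across `∂B` has positive non-local
energy on `ω`, for every interaction radius `R > 0`; hence no extension constant exists. -/
theorem stmt11
    (B : Set (EuclideanSpace ℝ (Fin 2))) (hB : B = Metric.ball (0 : EuclideanSpace ℝ (Fin 2)) 1)
    (ω : Set (EuclideanSpace ℝ (Fin 2)))
    (hω : ω = {z : EuclideanSpace ℝ (Fin 2) |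
      z 0 ∈ Set.Ioo (-1 : ℝ) 2 ∧ -(z 0) + 1 ≤ z 1 ∧ z 1 ≤ -(z 0) + 2})
    (u : EuclideanSpace ℝ (Fin 2) → ℝ)
    (hu : ∀ z, u z = if z ∈ ω then 0 else 1)
    (Φu : EuclideanSpace ℝ (Fin 2) → ℝ)
    (hΦu : ∀ z, Φu z = if z ∈ B then u z else u ((‖z‖ ^ 2)⁻¹ • z)) :
    ∀ R : ℝ, 0 < R → ∀ p : ℝ, 1 < p →
      (∫⁻ z in ((B ∩ ω) ×ˢ (B ∩ ω)) ∩
          {z : EuclideanSpace ℝ (Fin 2) × EuclideanSpace ℝ (Fin 2) | dist z.1 z.2 ≤ R},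
          ENNReal.ofReal (|u z.1 - u z.2| ^ p) ∂(volume.prod volume)) = 0 ∧
      0 < (∫⁻ z in (ω ×ˢ ω) ∩
          {z : EuclideanSpace ℝ (Fin 2) × EuclideanSpace ℝ (Fin 2) | dist z.1 z.2 ≤ R},
          ENNReal.ofReal (|Φu z.1 - Φu z.2| ^ p) ∂(volume.prod volume)) ∧
      ∀ C : ℝ≥0∞,
        ¬ ((∫⁻ z in (ω ×ˢ ω) ∩
            {z : EuclideanSpace ℝ (Fin 2) × EuclideanSpace ℝ (Fin 2) | dist z.1 z.2 ≤ R},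
            ENNReal.ofReal (|Φu z.1 - Φu z.2| ^ p) ∂(volume.prod volume)) ≤
          C * ∫⁻ z in ((B ∩ ω) ×ˢ (B ∩ ω)) ∩
            {z : EuclideanSpace ℝ (Fin 2) × EuclideanSpace ℝ (Fin 2) | dist z.1 z.2 ≤ R},
            ENNReal.ofReal (|u z.1 - u z.2| ^ p) ∂(volume.prod volume)) := by
  intro R hR p hp
  have hp0 : p ≠ 0 := by linarith
  -- measurability of ω
  have hωeq : ω = (fun z : EuclideanSpace ℝ (Fin 2) => z 0) ⁻¹' Set.Ioo (-1 : ℝ) 2 ∩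
      (fun z : EuclideanSpace ℝ (Fin 2) => z 0 + z 1) ⁻¹' Set.Icc (1 : ℝ) 2 := by
    rw [hω]; ext z
    simp only [Set.mem_setOf_eq, Set.mem_inter_iff, Set.mem_preimage, Set.mem_Ioo, Set.mem_Icc]
    constructor
    · rintro ⟨h1, h2, h3⟩; exact ⟨h1, by constructor <;> linarith⟩
    · rintro ⟨h1, h2, h3⟩; exact ⟨h1, by linarith, by linarith⟩
  have hωm : MeasurableSet ω := by
    rw [hωeq]
    exact (measurableSet_Ioo.preimage (cont_eval 0).measurable).inter
      (measurableSet_Icc.preimage ((cont_eval 0).add (cont_eval 1)).measurable)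
  have hBm : MeasurableSet B := by rw [hB]; exact measurableSet_ball
  have hDm : MeasurableSet {z : EuclideanSpace ℝ (Fin 2) × EuclideanSpace ℝ (Fin 2) |
      dist z.1 z.2 ≤ R} :=
    measurableSet_le (continuous_dist.measurable) measurable_const
  -- Part 1 : zero energy
  have part1 : (∫⁻ z in ((B ∩ ω) ×ˢ (B ∩ ω)) ∩
      {z : EuclideanSpace ℝ (Fin 2) × EuclideanSpace ℝ (Fin 2) | dist z.1 z.2 ≤ R},
      ENNReal.ofReal (|u z.1 - u z.2| ^ p) ∂(volume.prod volume)) = 0 := by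
    have hTm : MeasurableSet (((B ∩ ω) ×ˢ (B ∩ ω)) ∩
        {z : EuclideanSpace ℝ (Fin 2) × EuclideanSpace ℝ (Fin 2) | dist z.1 z.2 ≤ R}) :=
      (((hBm.inter hωm).prod (hBm.inter hωm))).inter hDm
    rw [setLIntegral_congr_fun hTm ?_, lintegral_zero]
    rintro z ⟨⟨⟨-, hz1⟩, ⟨-, hz2⟩⟩, -⟩
    have h1 : u z.1 = 0 := by rw [hu]; simp [hz1]
    have h2 : u z.2 = 0 := by rw [hu]; simp [hz2]
    simp only [h1, h2]
    simp [Real.zero_rpow hp0]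
  -- Part 2 : positive energy for the reflection
  have part2 : 0 < (∫⁻ z in (ω ×ˢ ω) ∩
      {z : EuclideanSpace ℝ (Fin 2) × EuclideanSpace ℝ (Fin 2) | dist z.1 z.2 ≤ R},
      ENNReal.ofReal (|Φu z.1 - Φu z.2| ^ p) ∂(volume.prod volume)) := by
    set t : ℝ := min (R / 3) (1 / 2) with ht_def
    have ht0 : 0 < t := lt_min (by linarith) (by norm_num)
    have ht2 : t ≤ 1 / 2 := min_le_right _ _
    have htR : 3 * t ≤ R := by
      have := min_le_left (R / 3) (1 / 2); rw [← ht_def] at this; linarith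
    set S₁ : Set (EuclideanSpace ℝ (Fin 2)) :=
      {z | z 0 ∈ Set.Ioo (1 + t / 2) (1 + t) ∧ z 1 ∈ Set.Ioo 0 (t / 4)} with hS₁def
    set S₂ : Set (EuclideanSpace ℝ (Fin 2)) :=
      {z | z 0 ∈ Set.Ioo (1 - 7 * t / 8) (1 - 3 * t / 4) ∧ z 1 ∈ Set.Ioo (7 * t / 8) t}
      with hS₂def
    have hS₁open : IsOpen S₁ := by
      have : S₁ = (fun z : EuclideanSpace ℝ (Fin 2) => z 0) ⁻¹' Set.Ioo (1 + t / 2) (1 + t) ∩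
          (fun z : EuclideanSpace ℝ (Fin 2) => z 1) ⁻¹' Set.Ioo 0 (t / 4) := rfl
      rw [this]
      exact (isOpen_Ioo.preimage (cont_eval 0)).inter (isOpen_Ioo.preimage (cont_eval 1))
    have hS₂open : IsOpen S₂ := by
      have : S₂ = (fun z : EuclideanSpace ℝ (Fin 2) => z 0) ⁻¹'
            Set.Ioo (1 - 7 * t / 8) (1 - 3 * t / 4) ∩
          (fun z : EuclideanSpace ℝ (Fin 2) => z 1) ⁻¹' Set.Ioo (7 * t / 8) t := rfl
      rw [this]
      exact (isOpen_Ioo.preimage (cont_eval 0)).inter (isOpen_Ioo.preimage (cont_eval 1))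
    have hS₁ne : S₁.Nonempty := by
      refine ⟨pt' (1 + 3 * t / 4) (t / 8), ?_⟩
      constructor <;> constructor <;>
        simp only [pt'] <;> norm_num <;> linarith
    have hS₂ne : S₂.Nonempty := by
      refine ⟨pt' (1 - 13 * t / 16) (15 * t / 16), ?_⟩
      constructor <;> constructor <;>
        simp only [pt'] <;> norm_num <;> linarith
    -- S₁ ⊆ ω, outside B, with inversion outside ω
    have hS₁ω : ∀ z ∈ S₁, z ∈ ω := by
      rintro z ⟨⟨ha, hb⟩, ⟨hc, hd⟩⟩
      rw [hω]
      refine ⟨⟨by linarith, by linarith⟩, by linarith, by linarith⟩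
    have hS₁notB : ∀ z ∈ S₁, z ∉ B := by
      rintro z ⟨⟨ha, hb⟩, ⟨hc, hd⟩⟩ hzB
      rw [hB, Metric.mem_ball, dist_zero_right] at hzB
      have hn := normsq_eq z
      nlinarith [norm_nonneg z]
    have hS₁inv : ∀ z ∈ S₁, ((‖z‖ ^ 2)⁻¹ • z) ∉ ω := by
      rintro z ⟨⟨ha, hb⟩, ⟨hc, hd⟩⟩ hmem
      rw [hω] at hmem
      obtain ⟨-, h2, -⟩ := hmem
      have hn := normsq_eq z
      have hs : (0 : ℝ) < ‖z‖ ^ 2 := by nlinarith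
      have e0 : ((‖z‖ ^ 2)⁻¹ • z) 0 = (‖z‖ ^ 2)⁻¹ * z 0 := rfl
      have e1 : ((‖z‖ ^ 2)⁻¹ • z) 1 = (‖z‖ ^ 2)⁻¹ * z 1 := rfl
      rw [e0, e1] at h2
      -- h2 : -( (‖z‖^2)⁻¹ * z 0) + 1 ≤ (‖z‖^2)⁻¹ * z 1
      have key : z 0 + z 1 < ‖z‖ ^ 2 := by nlinarith
      have : (‖z‖ ^ 2)⁻¹ * (z 0 + z 1) < 1 := by
        rw [inv_mul_lt_iff₀ hs]; linarith
      have hexp : (‖z‖ ^ 2)⁻¹ * (z 0 + z 1) =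
          (‖z‖ ^ 2)⁻¹ * z 0 + (‖z‖ ^ 2)⁻¹ * z 1 := by ring
      linarith [hexp ▸ this]
    have hS₂ω : ∀ z ∈ S₂, z ∈ ω := by
      rintro z ⟨⟨ha, hb⟩, ⟨hc, hd⟩⟩
      rw [hω]
      refine ⟨⟨by linarith, by linarith⟩, by linarith, by linarith⟩
    have hS₂B : ∀ z ∈ S₂, z ∈ B := by
      rintro z ⟨⟨ha, hb⟩, ⟨hc, hd⟩⟩
      rw [hB, Metric.mem_ball, dist_zero_right]
      have hn := normsq_eq z
      nlinarith [norm_nonneg z]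
    have hdist : ∀ x ∈ S₁, ∀ y ∈ S₂, dist x y ≤ R := by
      rintro x ⟨⟨ha, hb⟩, ⟨hc, hd⟩⟩ y ⟨⟨he, hf⟩, ⟨hg, hh⟩⟩
      rw [dist_eq_norm]
      have hn := normsq_eq (x - y)
      have e0 : (x - y) 0 = x 0 - y 0 := rfl
      have e1 : (x - y) 1 = x 1 - y 1 := rfl
      rw [e0, e1] at hn
      nlinarith [norm_nonneg (x - y)]
    -- the integrand is 1 on S₁ ×ˢ S₂
    have hval : ∀ z ∈ S₁ ×ˢ S₂, ENNReal.ofReal (|Φu z.1 - Φu z.2| ^ p) = 1 := by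
      rintro z ⟨hz1, hz2⟩
      have h1 : Φu z.1 = 1 := by
        rw [hΦu]
        rw [if_neg (hS₁notB _ hz1), hu, if_neg (hS₁inv _ hz1)]
      have h2 : Φu z.2 = 0 := by
        rw [hΦu, if_pos (hS₂B _ hz2), hu, if_pos (hS₂ω _ hz2)]
      rw [h1, h2]
      norm_num [Real.one_rpow]
    have hsub : S₁ ×ˢ S₂ ⊆ (ω ×ˢ ω) ∩
        {z : EuclideanSpace ℝ (Fin 2) × EuclideanSpace ℝ (Fin 2) | dist z.1 z.2 ≤ R} := by
      rintro z ⟨hz1, hz2⟩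
      exact ⟨⟨hS₁ω _ hz1, hS₂ω _ hz2⟩, hdist _ hz1 _ hz2⟩
    have hSm : MeasurableSet (S₁ ×ˢ S₂) :=
      (hS₁open.measurableSet).prod (hS₂open.measurableSet)
    calc (0 : ℝ≥0∞) < volume S₁ * volume S₂ :=
          ENNReal.mul_pos (hS₁open.measure_pos volume hS₁ne).ne'
            (hS₂open.measure_pos volume hS₂ne).ne'
      _ = (volume.prod volume) (S₁ ×ˢ S₂) := (Measure.prod_prod _ _).symm
      _ = ∫⁻ _ in S₁ ×ˢ S₂, 1 ∂(volume.prod volume) := (setLIntegral_one _).symm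
      _ = ∫⁻ z in S₁ ×ˢ S₂,
            ENNReal.ofReal (|Φu z.1 - Φu z.2| ^ p) ∂(volume.prod volume) :=
          (setLIntegral_congr_fun hSm (fun z hz => hval z hz)).symm
      _ ≤ _ := lintegral_mono_set hsub
  refine ⟨part1, part2, ?_⟩
  intro C h
  rw [part1, mul_zero] at h
  exact part2.not_ge h
end
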